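/- Consider the algebraic equilibrium equations of the sex-structured entomological model: a pair (M,F) of nonnegative reals is an equilibrium iff rρF e^{−β(M+F)} = μ_M M and (1−r)ρF e^{−β(M+F)} = μ_F F. Then: (i) if N_F < 1, the only nonnegative solution is (M,F) = (0,0); (ii) if N_F > 1, there is exactly one solution with M > 0 and F > 0, namely F* = (N_F/(N_F+N_M))·(1/β)·ln N_F and M* = (N_M/(N_F+N_M))·(1/β)·ln N_F. -/

import Mathlib

/-- Basic offspring number for females. -/
noncomputable def NF (r ρ μF : ℝ) : ℝ := (1 - r) * ρ / μF

/-- Basic offspring number for males. -/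
noncomputable def NM (r ρ μM : ℝ) : ℝ := r * ρ / μM

/-- Equilibrium equations of the sex-structured entomological model. -/
def isEquil (r ρ β μM μF M F : ℝ) : Prop :=
  r * ρ * F * Real.exp (-(β * (M + F))) = μM * M ∧
  (1 - r) * ρ * F * Real.exp (-(β * (M + F))) = μF * F

lemma char (r ρ β μM μF : ℝ)
    (hr0 : 0 < r) (hr1 : r < 1) (hρ : 0 < ρ) (hβ : 0 < β)
    (hμM : 0 < μM) (hμF : 0 < μF)
    (M F : ℝ) (hM : 0 < M) (hF : 0 < F) (h : isEquil r ρ β μM μF M F) :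
        M = NM r ρ μM / (NF r ρ μF + NM r ρ μM) * (1 / β) * Real.log (NF r ρ μF) ∧
        F = NF r ρ μF / (NF r ρ μF + NM r ρ μM) * (1 / β) * Real.log (NF r ρ μF) := by
  obtain ⟨h1, h2⟩ := h
  have h1r : (1 : ℝ) - r ≠ 0 := by linarith
  have hρ' : ρ ≠ 0 := hρ.ne'
  have hμF' : μF ≠ 0 := hμF.ne'
  have hμM' : μM ≠ 0 := hμM.ne'
  have hβ' : β ≠ 0 := hβ.ne'
  have hNFpos : 0 < NF r ρ μF := div_pos (mul_pos (by linarith) hρ) hμF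
  have hNMpos : 0 < NM r ρ μM := div_pos (mul_pos hr0 hρ) hμM
  have hsum : NF r ρ μF + NM r ρ μM ≠ 0 := by positivity
  have hA : Real.exp (-(β * (M + F))) = μF / ((1 - r) * ρ) := by
    have hc := mul_right_cancel₀ hF.ne'
      (show ((1 - r) * ρ * Real.exp (-(β * (M + F)))) * F = μF * F by linear_combination h2)
    rw [eq_div_iff (by positivity : (1 - r) * ρ ≠ 0)]
    linear_combination hc
  have hlog : β * (M + F) = Real.log (NF r ρ μF) := by
    have heq : Real.exp (-(β * (M + F))) = Real.exp (-Real.log (NF r ρ μF)) := by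
      rw [hA, Real.exp_neg, Real.exp_log hNFpos]
      unfold NF
      rw [inv_div]
    have := Real.exp_injective heq
    linarith
  have hlin : r * μF * F = μM * (1 - r) * M := by
    rw [hA] at h1
    field_simp at h1
    have := mul_right_cancel₀ hρ'
      (show (r * μF * F) * ρ = (μM * (1 - r) * M) * ρ by linear_combination ρ * h1)
    linarith
  have hd : (0:ℝ) < (1 - r) * ρ * μM + r * ρ * μF := by
    nlinarith [mul_pos (mul_pos (show (0:ℝ) < 1 - r by linarith) hρ) hμM,
      mul_pos (mul_pos hr0 hρ) hμF]
  rw [← hlog]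
  constructor
  · unfold NF NM at hsum ⊢
    field_simp
    rw [eq_div_iff (ne_of_gt (by nlinarith [mul_pos hr0 hμF, mul_pos hμM (sub_pos.mpr hr1)]))]
    linear_combination (-1) * hlin
  · unfold NF NM at hsum ⊢
    field_simp
    rw [eq_div_iff (ne_of_gt (by nlinarith [mul_pos hr0 hμF, mul_pos hμM (sub_pos.mpr hr1)]))]
    linear_combination hlin

theorem stmt_0 (r ρ β μM μF : ℝ)
    (hr0 : 0 < r) (hr1 : r < 1) (hρ : 0 < ρ) (hβ : 0 < β)
    (hμM : 0 < μM) (hμF : 0 < μF) :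
    (NF r ρ μF < 1 →
      ∀ M F : ℝ, 0 ≤ M → 0 ≤ F → isEquil r ρ β μM μF M F → M = 0 ∧ F = 0) ∧
    (1 < NF r ρ μF →
      (∃! p : ℝ × ℝ, 0 < p.1 ∧ 0 < p.2 ∧ isEquil r ρ β μM μF p.1 p.2) ∧
      ∀ M F : ℝ, 0 < M → 0 < F → isEquil r ρ β μM μF M F →
        M = NM r ρ μM / (NF r ρ μF + NM r ρ μM) * (1 / β) * Real.log (NF r ρ μF) ∧
        F = NF r ρ μF / (NF r ρ μF + NM r ρ μM) * (1 / β) * Real.log (NF r ρ μF)) := by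
  constructor
  · -- subcritical case
    intro hNF M F hM hF h
    obtain ⟨h1, h2⟩ := h
    have hF0 : F = 0 := by
      by_contra hF0
      have hFpos : 0 < F := lt_of_le_of_ne hF (Ne.symm hF0)
      have hc := mul_right_cancel₀ hFpos.ne'
        (show ((1 - r) * ρ * Real.exp (-(β * (M + F)))) * F = μF * F by linear_combination h2)
      have hexp : Real.exp (-(β * (M + F))) ≤ 1 := by
        rw [Real.exp_le_one_iff]
        nlinarith
      have h1r : (0:ℝ) < 1 - r := by linarith
      have hle : μF ≤ (1 - r) * ρ := by nlinarith [Real.exp_pos (-(β * (M + F)))]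
      have : (1:ℝ) ≤ NF r ρ μF := by
        rw [NF, le_div_iff₀ hμF]; linarith
      linarith
    have hM0 : M = 0 := by
      rw [hF0] at h1
      have hμMM : μM * M = 0 := by linear_combination -h1
      rcases mul_eq_zero.mp hμMM with h | h
      · exact absurd h hμM.ne'
      · exact h
    exact ⟨hM0, hF0⟩
  · -- supercritical case
    intro hNF
    have h1r : (0:ℝ) < 1 - r := by linarith
    have hNFpos : 0 < NF r ρ μF := div_pos (mul_pos h1r hρ) hμF
    have hNMpos : 0 < NM r ρ μM := div_pos (mul_pos hr0 hρ) hμM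
    have hsum : (0:ℝ) < NF r ρ μF + NM r ρ μM := by linarith
    have hL : 0 < Real.log (NF r ρ μF) := Real.log_pos hNF
    set L := Real.log (NF r ρ μF) with hLdef
    set Ms := NM r ρ μM / (NF r ρ μF + NM r ρ μM) * (1 / β) * L with hMs
    set Fs := NF r ρ μF / (NF r ρ μF + NM r ρ μM) * (1 / β) * L with hFs
    have hMspos : 0 < Ms := by
      apply mul_pos (mul_pos (div_pos hNMpos hsum) _) hL
      positivity
    have hFspos : 0 < Fs := by
      apply mul_pos (mul_pos (div_pos hNFpos hsum) _) hL
      positivity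
    have hsumMF : β * (Ms + Fs) = L := by
      rw [hMs, hFs]
      field_simp
      ring
    have hexp : Real.exp (-(β * (Ms + Fs))) = (NF r ρ μF)⁻¹ := by
      rw [hsumMF, Real.exp_neg, Real.exp_log hNFpos]
    have hequil : isEquil r ρ β μM μF Ms Fs := by
      constructor
      · rw [hexp, hMs, hFs, NF, NM]
        field_simp
      · rw [hexp, hFs, NF, NM]
        field_simp
    refine ⟨⟨(Ms, Fs), ⟨hMspos, hFspos, hequil⟩, ?_⟩, ?_⟩
    · rintro ⟨M, F⟩ ⟨hM, hF, h⟩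
      obtain ⟨hMe, hFe⟩ := char r ρ β μM μF hr0 hr1 hρ hβ hμM hμF M F hM hF h
      simp only [Prod.mk.injEq]
      exact ⟨hMe, hFe⟩
    · intro M F hM hF h
      exact char r ρ β μM μF hr0 hr1 hρ hβ hμM hμF M F hM hF h
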